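/- arXiv:1506.02228 — 2 statements merged into one kernel-verified Lean document; each statement's English description precedes it below -/
import Mathlib

section
/- Let f : X × Y → ℝ∪{±∞} where X is a compact topological space and Y ⊆ ℝ. If for every y ∈ Y the function x ↦ f(x,y) is lower semicontinuous, and for every x ∈ X the function y ↦ f(x,y) is monotone (non-decreasing), then inf_{x∈X} sup_{y∈Y} f(x,y) = sup_{y∈Y} inf_{x∈X} f(x,y). -/
open Set

/-- Minimax for lower semicontinuous, monotone (in the second argument) extended-real-valued
functions on a compact space times a subset of ℝ (Mosonyi–Hiai, Corollary A2). -/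
theorem minimax_lsc_monotone
    {X : Type*} [TopologicalSpace X] [CompactSpace X] [Nonempty X]
    (Y : Set ℝ) (hY : Y.Nonempty) (f : X → ℝ → EReal)
    (hlsc : ∀ y ∈ Y, LowerSemicontinuous (fun x => f x y))
    (hmono : ∀ x : X, MonotoneOn (fun y => f x y) Y) :
    ⨅ x : X, ⨆ y ∈ Y, f x y = ⨆ y ∈ Y, ⨅ x : X, f x y := by
  apply le_antisymm
  · -- hard direction
    set S : EReal := ⨆ y ∈ Y, ⨅ x : X, f x y with hS
    refine le_of_forall_gt_imp_ge_of_dense fun c hc => ?_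
    -- sublevel sets
    have : Nonempty Y := hY.to_subtype
    set K : Y → Set X := fun y => {x | f x y ≤ c} with hK
    have hne : ∀ y : Y, (K y).Nonempty := by
      intro y
      have h1 : (⨅ x : X, f x y) ≤ S := le_biSup (fun y => ⨅ x : X, f x y) y.2
      have h2 : (⨅ x : X, f x y) < c := lt_of_le_of_lt h1 hc
      obtain ⟨x, hx⟩ := exists_lt_of_csInf_lt (Set.range_nonempty _) (by
        simpa [iInf] using h2)
      obtain ⟨x', rfl⟩ := hx.1
      exact ⟨x', le_of_lt hx.2⟩
    have hclosed : ∀ y : Y, IsClosed (K y) :=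
      fun y => (hlsc y y.2).isClosed_preimage c
    have hcompact : ∀ y : Y, IsCompact (K y) :=
      fun y => (hclosed y).isCompact
    have hdir : Directed (· ⊇ ·) K := by
      intro y₁ y₂
      rcases le_total (y₁ : ℝ) y₂ with h | h
      · exact ⟨y₂, fun x hx => le_trans (hmono x y₁.2 y₂.2 h) hx, fun x hx => hx⟩
      · exact ⟨y₁, fun x hx => hx, fun x hx => le_trans (hmono x y₂.2 y₁.2 h) hx⟩
    obtain ⟨x₀, hx₀⟩ := IsCompact.nonempty_iInter_of_directed_nonempty_isCompact_isClosed
      K hdir hne hcompact hclosed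
    have hx₀' : ∀ y ∈ Y, f x₀ y ≤ c := by
      intro y hy
      exact (Set.mem_iInter.1 hx₀ ⟨y, hy⟩)
    calc (⨅ x : X, ⨆ y ∈ Y, f x y) ≤ ⨆ y ∈ Y, f x₀ y := iInf_le _ x₀
      _ ≤ c := by exact iSup₂_le hx₀'
  · exact iSup₂_le fun y hy => le_iInf fun x => le_trans (iInf_le _ x) (le_iSup₂ (f := fun y _ => f x y) y hy)
end

section
/- Let f : X × Y → ℝ∪{±∞} where X is a compact topological space and Y ⊆ ℝ. If for every y ∈ Y the function x ↦ f(x,y) is upper semicontinuous, and for every x ∈ X the function y ↦ f(x,y) is monotone, then inf_{y∈Y} sup_{x∈X} f(x,y) = sup_{x∈X} inf_{y∈Y} f(x,y). -/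
open Set

/-- Minimax for upper semicontinuous, monotone (in the second argument) extended-real-valued
functions on a compact space times a subset of ℝ (Mosonyi–Hiai, Corollary A2, second form). -/
theorem minimax_usc_monotone
    {X : Type*} [TopologicalSpace X] [CompactSpace X] [Nonempty X]
    (Y : Set ℝ) (hY : Y.Nonempty) (f : X → ℝ → EReal)
    (husc : ∀ y ∈ Y, UpperSemicontinuous (fun x => f x y))
    (hmono : ∀ x : X, MonotoneOn (fun y => f x y) Y) :
    ⨅ y ∈ Y, ⨆ x : X, f x y = ⨆ x : X, ⨅ y ∈ Y, f x y := by
  refine le_antisymm ?_ (iSup_le fun x => le_iInf₂ fun y hy =>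
    (iInf₂_le y hy).trans (le_iSup (fun x => f x y) x))
  by_contra h
  push_neg at h
  obtain ⟨c, hc1, hc2⟩ := exists_between h
  -- for each x there is y ∈ Y with f x y < c
  have hx : ∀ x : X, ∃ y ∈ Y, f x y < c := by
    intro x
    have h1 : ⨅ y ∈ Y, f x y < c :=
      lt_of_le_of_lt (le_iSup (fun x => ⨅ y ∈ Y, f x y) x) hc1
    obtain ⟨y, hy⟩ := iInf_lt_iff.mp h1
    obtain ⟨hyY, hlt⟩ := iInf_lt_iff.mp hy
    exact ⟨y, hyY, hlt⟩
  choose yx hyxY hyxlt using hx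
  set U : X → Set X := fun x => {z | f z (yx x) < c} with hU
  have hopen : ∀ x, IsOpen (U x) := fun x =>
    (upperSemicontinuous_iff_isOpen_preimage.mp (husc (yx x) (hyxY x))) c
  obtain ⟨t, ht⟩ := isCompact_univ.elim_finite_subcover U hopen
    (fun z _ => mem_iUnion.mpr ⟨z, hyxlt z⟩)
  have htne : t.Nonempty := by
    obtain ⟨x⟩ := (inferInstance : Nonempty X)
    obtain ⟨i, hi, _⟩ := mem_iUnion₂.mp (ht (mem_univ x))
    exact ⟨i, hi⟩
  set y0 : ℝ := t.inf' htne yx with hy0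
  have hy0Y : y0 ∈ Y := by
    obtain ⟨x0, _, heq⟩ := t.exists_mem_eq_inf' htne yx
    rw [hy0, heq]; exact hyxY x0
  have hall : ∀ z : X, f z y0 < c := by
    intro z
    obtain ⟨i, hi, hz⟩ := mem_iUnion₂.mp (ht (mem_univ z))
    exact lt_of_le_of_lt
      (hmono z hy0Y (hyxY i) (Finset.inf'_le _ hi)) hz
  have : ⨅ y ∈ Y, ⨆ x : X, f x y ≤ c :=
    (iInf₂_le y0 hy0Y).trans (iSup_le fun z => (hall z).le)
  exact absurd hc2 (not_lt.mpr this)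
end
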